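/- Let f : ℂ → ℂ be entire with f(s + i) = f(s) for all s ∈ ℂ, and suppose there exists C ≥ 0 such that |f(s)| ≤ exp(C · |exp(−2πs)|) for all s ∈ ℂ. Then there exists an entire function g : ℂ → ℂ such that f(s) = g(exp(−2πs)) for all s ∈ ℂ. -/

import Mathlib

open Complex

private lemma periodZ (f : ℂ → ℂ) (hper : ∀ s : ℂ, f (s + Complex.I) = f s) :
    ∀ (n : ℤ) (s : ℂ), f (s + n * Complex.I) = f s := by
  intro n
  induction n using Int.induction_on with
  | zero => simp
  | succ k ih =>
      intro s
      push_cast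
      rw [show s + ((k : ℂ) + 1) * Complex.I = (s + (k : ℂ) * Complex.I) + Complex.I by ring,
        hper]
      have := ih s
      push_cast at this
      exact this
  | pred k ih =>
      intro s
      push_cast
      have h2 := ih s
      push_cast at h2
      calc f (s + (-(k : ℂ) - 1) * Complex.I)
          = f (s + (-(k : ℂ) - 1) * Complex.I + Complex.I) := (hper _).symm
        _ = f (s + (-(k : ℂ)) * Complex.I) := by ring_nf
        _ = f s := h2

/-- Descent to the cylinder: if `f` is entire, periodic under `s ↦ s + i`, and satisfies
`|f s| ≤ exp(C |exp(−2πs)|)`, then `f s = g (exp(−2πs))` for some entire function `g`. -/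
theorem exists_entire_descend (f : ℂ → ℂ) (hf : Differentiable ℂ f)
    (hper : ∀ s : ℂ, f (s + Complex.I) = f s)
    (C : ℝ) (hC : 0 ≤ C)
    (hbound : ∀ s : ℂ, ‖f s‖ ≤
      Real.exp (C * ‖Complex.exp (-(2 * (Real.pi : ℂ)) * s)‖)) :
    ∃ g : ℂ → ℂ, Differentiable ℂ g ∧
      ∀ s : ℂ, f s = g (Complex.exp (-(2 * (Real.pi : ℂ)) * s)) := by
  set τ : ℂ := -(2 * (Real.pi : ℂ)) with hτ
  have hτ0 : τ ≠ 0 := by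
    simp [hτ, Real.pi_ne_zero]
  have hZ := periodZ f hper
  -- well-definedness
  have hwell : ∀ s t : ℂ, Complex.exp (τ * s) = Complex.exp (τ * t) → f s = f t := by
    intro s t h
    rw [Complex.exp_eq_exp_iff_exists_int] at h
    obtain ⟨n, hn⟩ := h
    have hs : s = t + (-n : ℤ) * Complex.I := by
      have : τ * s = τ * (t + (-n : ℤ) * Complex.I) := by
        rw [hn, hτ]; push_cast; ring
      exact mul_left_cancel₀ hτ0 this
    rw [hs, hZ]
  set g0 : ℂ → ℂ := fun z => f (Complex.log z / τ) with hg0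
  have hkey : ∀ z : ℂ, z ≠ 0 → ∀ s : ℂ, Complex.exp (τ * s) = z → f s = g0 z := by
    intro z hz s hs
    apply hwell
    rw [hs]
    rw [mul_div_cancel₀ _ hτ0, Complex.exp_log hz]
  -- the alternative branch
  set g1 : ℂ → ℂ := fun z => f (Complex.log (-z) / τ + Complex.I / 2) with hg1
  have hg01 : ∀ z : ℂ, z ≠ 0 → g0 z = g1 z := by
    intro z hz
    refine (hkey z hz _ ?_).symm
    have e1 : τ * (Complex.log (-z) / τ + Complex.I / 2) =
        Complex.log (-z) + -((Real.pi : ℂ) * Complex.I) := by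
      rw [mul_add, mul_div_cancel₀ _ hτ0, hτ]; ring
    rw [e1, Complex.exp_add, Complex.exp_log (neg_ne_zero.mpr hz), Complex.exp_neg,
      Complex.exp_pi_mul_I]
    norm_num
  -- differentiability away from 0
  have hdiff0 : ∀ z : ℂ, z ≠ 0 → DifferentiableAt ℂ g0 z := by
    intro z hz
    by_cases hsl : z ∈ Complex.slitPlane
    · exact (hf.differentiableAt).comp z ((Complex.differentiableAt_log hsl).div_const τ)
    · have hsl' : -z ∈ Complex.slitPlane := by
        rw [Complex.mem_slitPlane_iff] at hsl ⊢
        push_neg at hsl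
        rcases lt_or_eq_of_le hsl.1 with h | h
        · left; simpa using h
        · exact absurd (Complex.ext (by simpa using h) (by simpa using hsl.2)) hz
      have h1 : DifferentiableAt ℂ g1 z := by
        apply hf.differentiableAt.comp
        apply DifferentiableAt.add_const
        apply DifferentiableAt.div_const
        exact (Complex.differentiableAt_log hsl').comp z differentiableAt_id.neg
      refine h1.congr_of_eventuallyEq ?_
      filter_upwards [isOpen_ne.mem_nhds hz] with w hw
      exact hg01 w hw
  -- boundedness near 0
  have hbdd : BddAbove (norm ∘ g0 '' (Metric.ball (0 : ℂ) 1 \ {0})) := by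
    refine ⟨Real.exp C, ?_⟩
    rintro x ⟨z, ⟨hz1, hz0⟩, rfl⟩
    simp only [Set.mem_singleton_iff] at hz0
    have hz1' : ‖z‖ ≤ 1 := le_of_lt (by simpa using hz1)
    have hb := hbound (Complex.log z / τ)
    rw [mul_div_cancel₀ _ hτ0, Complex.exp_log hz0] at hb
    simp only [Function.comp_apply, hg0]
    exact le_trans hb (Real.exp_le_exp.mpr (by nlinarith [norm_nonneg z]))
  have hball : Metric.ball (0 : ℂ) 1 ∈ nhds (0 : ℂ) :=
    Metric.ball_mem_nhds 0 one_pos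
  have hdOn : DifferentiableOn ℂ g0 (Metric.ball (0 : ℂ) 1 \ {0}) := by
    intro z hz
    exact (hdiff0 z hz.2).differentiableWithinAt
  have hG := Complex.differentiableOn_update_limUnder_of_bddAbove hball hdOn hbdd
  set G : ℂ → ℂ := Function.update g0 0 (Filter.limUnder (nhdsWithin 0 {(0:ℂ)}ᶜ) g0) with hGdef
  refine ⟨G, ?_, ?_⟩
  · intro z
    by_cases hz : z = 0
    · subst hz
      exact hG.differentiableAt hball
    · have h1 : DifferentiableAt ℂ g0 z := hdiff0 z hz
      refine h1.congr_of_eventuallyEq ?_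
      filter_upwards [isOpen_ne.mem_nhds hz] with w hw
      simp [hGdef, Function.update_of_ne hw]
  · intro s
    have hne : Complex.exp (τ * s) ≠ 0 := Complex.exp_ne_zero _
    rw [show G (Complex.exp (τ * s)) = g0 (Complex.exp (τ * s)) from
      Function.update_of_ne hne _ _]
    exact hkey _ hne s rfl
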